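/- Let d ≥ 1, let Ξ be a nonempty finite type, let f : Ξ → (Fin d → Fin d) be a family of functions, let λ be a probability vector on Ξ, and let A be the column-stochastic matrix A x x' = ∑_{ξ : f ξ x' = x} λ ξ. Set D = max over x ∈ Fin d of ∑_ξ |（f ξ)⁻¹({x})|. Then A admits a classical Stinespring dilation with ancilla dimension D: there exist a probability vector q on Fin D and a permutation π of Fin d × Fin D such that A x x' = ∑_{y' ∈ Fin D, (π (x', y')).1 = x} q y' for all x, x'. (This improves the generic ancilla dimension N·d of the explicit construction to max_x ∑_ξ |f_ξ⁻¹(x)|.) -/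

import Mathlib

/-- A stochastic matrix given as a convex combination of deterministic maps `f ξ`
admits a classical Stinespring dilation with ancilla dimension
`D = max_x ∑_ξ |f_ξ⁻¹({x})|`. -/
theorem stinespring_improved_dim (d : ℕ) (hd : 1 ≤ d)
    (Ξ : Type) [Fintype Ξ] [Nonempty Ξ]
    (f : Ξ → Fin d → Fin d)
    (lam : Ξ → ℝ) (hl0 : ∀ ξ, 0 ≤ lam ξ) (hl1 : ∑ ξ, lam ξ = 1)
    (D : ℕ)
    (hD : D = Finset.univ.sup
      (fun x : Fin d => ∑ ξ : Ξ, (Finset.univ.filter (fun x' : Fin d => f ξ x' = x)).card)) :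
    ∃ (q : Fin D → ℝ) (π : Equiv.Perm (Fin d × Fin D)),
      (∀ y, 0 ≤ q y) ∧ (∑ y, q y = 1) ∧
      ∀ x x' : Fin d,
        (∑ ξ ∈ Finset.univ.filter (fun ξ : Ξ => f ξ x' = x), lam ξ) =
          ∑ y' ∈ Finset.univ.filter (fun y' : Fin D => (π (x', y')).1 = x), q y' := by
  classical
  set N := Fintype.card Ξ with hN
  set c : Fin d → ℕ :=
    fun x => ∑ ξ : Ξ, (Finset.univ.filter (fun x' : Fin d => f ξ x' = x)).card with hc
  have hcD : ∀ x, c x ≤ D := fun x => hD ▸ Finset.le_sup (Finset.mem_univ x)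
  have hsum_c : ∑ x, c x = N * d := by
    rw [Finset.sum_comm]
    have h1 : ∀ ξ : Ξ, ∑ x : Fin d,
        (Finset.univ.filter (fun x' : Fin d => f ξ x' = x)).card = d := by
      intro ξ
      rw [← Finset.card_eq_sum_card_fiberwise (fun x' _ => Finset.mem_univ (f ξ x'))]
      simp
    simp [h1, hN, Finset.sum_const, mul_comm]
  have hND : N ≤ D := by
    have h1 : ∑ x : Fin d, c x ≤ ∑ x : Fin d, D := Finset.sum_le_sum fun x _ => hcD x
    rw [hsum_c] at h1
    simp only [Finset.sum_const, Finset.card_univ, Fintype.card_fin, smul_eq_mul] at h1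
    rw [mul_comm d D] at h1
    exact Nat.le_of_mul_le_mul_right h1 hd
  have hB : d * (D - N) = ∑ x : Fin d, (D - c x) := by
    have h1 : ∑ x : Fin d, (D - c x) + ∑ x : Fin d, c x = d * D := by
      rw [← Finset.sum_add_distrib]
      have : ∀ x : Fin d, D - c x + c x = D := fun x => Nat.sub_add_cancel (hcD x)
      simp [this]
    have h2 : d * (D - N) + ∑ x : Fin d, c x = d * D := by
      rw [hsum_c, mul_comm N d, ← Nat.mul_add, Nat.sub_add_cancel hND]
    omega
  have e : Fin D ≃ Ξ ⊕ Fin (D - N) := Fintype.equivOfCardEq (by simp [hN]; omega)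
  have ψ : (Fin d × Fin (D - N)) ≃ (Σ x : Fin d, Fin (D - c x)) :=
    Fintype.equivOfCardEq (by simp [hB])
  set g : (Fin d × Ξ) ⊕ (Fin d × Fin (D - N)) → Fin d :=
    Sum.elim (fun p => f p.2 p.1) (fun p => (ψ p).1) with hg
  have hfib : ∀ x : Fin d, Fintype.card {a // g a = x} = D := by
    intro x
    rw [Fintype.card_subtype, Finset.card_filter]
    rw [Fintype.sum_sum_type]
    have hL : ∑ p : Fin d × Ξ, (if g (Sum.inl p) = x then 1 else 0) = c x := by
      simp only [hg, Sum.elim_inl]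
      rw [Fintype.sum_prod_type, Finset.sum_comm]
      simp only [hc]
      exact Finset.sum_congr rfl fun ξ _ => (Finset.card_filter _ _).symm
    have hR : ∑ p : Fin d × Fin (D - N), (if g (Sum.inr p) = x then 1 else 0) = D - c x := by
      simp only [hg, Sum.elim_inr]
      rw [Equiv.sum_comp ψ (fun s : (Σ y : Fin d, Fin (D - c y)) => if s.1 = x then (1:ℕ) else 0)]
      rw [← Finset.univ_sigma_univ, Finset.sum_sigma]
      simp [apply_ite Finset.card, Finset.sum_ite_eq']
    rw [hL, hR]
    have := hcD x
    omega
  set Φ : ((Fin d × Ξ) ⊕ (Fin d × Fin (D - N))) ≃ Fin d × Fin D :=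
    (Equiv.sigmaFiberEquiv g).symm.trans
      ((Equiv.sigmaCongrRight fun x => Fintype.equivFinOfCardEq (hfib x)).trans
        (Equiv.sigmaEquivProd (Fin d) (Fin D))) with hΦdef
  have hΦ : ∀ a, (Φ a).1 = g a := fun a => rfl
  set π : Equiv.Perm (Fin d × Fin D) :=
    ((Equiv.refl (Fin d)).prodCongr e).trans
      ((Equiv.prodSumDistrib (Fin d) Ξ (Fin (D - N))).trans Φ) with hπdef
  have hπ1 : ∀ (x' : Fin d) (y' : Fin D), (π (x', y')).1 =
      Sum.elim (fun ξ => f ξ x') (fun j : Fin (D - N) => (ψ (x', j)).1) (e y') := by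
    intro x' y'
    rcases h : e y' with ξ | j
    · show (Φ (Equiv.prodSumDistrib (Fin d) Ξ (Fin (D - N)) (x', e y'))).1 = _
      rw [h]; exact hΦ _
    · show (Φ (Equiv.prodSumDistrib (Fin d) Ξ (Fin (D - N)) (x', e y'))).1 = _
      rw [h]; exact hΦ _
  refine ⟨fun y => Sum.elim lam (fun _ => (0:ℝ)) (e y), π, ?_, ?_, ?_⟩
  · intro y
    show (0:ℝ) ≤ Sum.elim lam (fun _ => (0:ℝ)) (e y)
    rcases e y with ξ | j
    · exact hl0 ξ
    · exact le_refl 0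
  · rw [Equiv.sum_comp e (Sum.elim lam (fun _ => (0:ℝ)))]
    rw [Fintype.sum_sum_type]
    simp [hl1]
  · intro x x'
    have key : ∀ y' : Fin D,
        (if (π (x', y')).1 = x then Sum.elim lam (fun _ => (0:ℝ)) (e y') else 0) =
        (fun s : Ξ ⊕ Fin (D - N) =>
          if Sum.elim (fun ξ => f ξ x') (fun j : Fin (D - N) => (ψ (x', j)).1) s = x
          then Sum.elim lam (fun _ => (0:ℝ)) s else 0) (e y') := by
      intro y'; rw [hπ1]
    have main : ∑ y' ∈ Finset.univ.filter (fun y' : Fin D => (π (x', y')).1 = x),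
        Sum.elim lam (fun _ => (0:ℝ)) (e y') =
        ∑ ξ ∈ Finset.univ.filter (fun ξ : Ξ => f ξ x' = x), lam ξ := by
      rw [Finset.sum_filter]
      rw [Finset.sum_congr rfl (fun y' _ => key y')]
      rw [Equiv.sum_comp e (fun s : Ξ ⊕ Fin (D - N) =>
        if Sum.elim (fun ξ => f ξ x') (fun j : Fin (D - N) => (ψ (x', j)).1) s = x
        then Sum.elim lam (fun _ => (0:ℝ)) s else 0)]
      rw [Fintype.sum_sum_type]
      simp [Finset.sum_filter]
      refine (congrArg₂ (· + ·) (Finset.sum_congr rfl fun a _ => ?_)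
        (Finset.sum_eq_zero fun a _ => ite_self _)).trans (add_zero _)
      congr
    exact main.symm
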